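/- Let λ < 1 and let F = F_λ. Then for all reals x > 0, β > 0, and c > 0: F(x + c) − F(β + c) ≥ (1 + c/β)^{λ−1}·(F(x) − F(β)). Equivalently, (F(x + c) − F(β + c))/(1 + c/β)^{−1+λ} ≥ F(x) − F(β). -/

import Mathlib

open Real

/-- The transformation function `F_λ`. -/
noncomputable def Flam (lam : ℝ) (x : ℝ) : ℝ :=
  if lam = 0 then Real.log x else x ^ lam / lam

lemma hasDerivAt_Flam {lam t : ℝ} (ht : 0 < t) :
    HasDerivAt (Flam lam) (t ^ (lam - 1)) t := by
  rcases eq_or_ne lam 0 with h | h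
  · have : Flam lam = Real.log := by funext y; simp [Flam, h]
    rw [this]
    simpa [h, Real.rpow_neg_one] using Real.hasDerivAt_log ht.ne'
  · have : Flam lam = fun y => y ^ lam / lam := by funext y; simp [Flam, h]
    rw [this]
    have := (Real.hasDerivAt_rpow_const (p := lam) (Or.inl ht.ne')).div_const lam
    simpa [mul_comm, mul_div_assoc, mul_div_cancel_left₀ _ h] using this

theorem stmt_17 {lam : ℝ} (hlam : lam < 1)
    (x β c : ℝ) (hx : 0 < x) (hβ : 0 < β) (hc : 0 < c) :
    Flam lam (x + c) - Flam lam (β + c)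
      ≥ (1 + c / β) ^ (lam - 1) * (Flam lam x - Flam lam β) := by
  set K : ℝ := (1 + c / β) ^ (lam - 1) with hK
  set g : ℝ → ℝ := fun t => Flam lam (t + c) - K * Flam lam t with hg
  have hder : ∀ t : ℝ, 0 < t →
      HasDerivAt g ((t + c) ^ (lam - 1) - K * t ^ (lam - 1)) t := by
    intro t ht
    have h1 : HasDerivAt (fun t : ℝ => Flam lam (t + c)) ((t + c) ^ (lam - 1)) t := by
      simpa [Function.comp_def] using (hasDerivAt_Flam (by linarith : (0:ℝ) < t + c)).comp t
        ((hasDerivAt_id t).add_const c)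
    exact h1.sub ((hasDerivAt_Flam ht).const_mul K)
  -- key: split (t+c)^(lam-1)
  have hsplit : ∀ t : ℝ, 0 < t →
      (t + c) ^ (lam - 1) = (1 + c / t) ^ (lam - 1) * t ^ (lam - 1) := by
    intro t ht
    rw [← Real.mul_rpow (by positivity) ht.le]
    congr 1
    field_simp
  have hexp : lam - 1 ≤ 0 := by linarith
  have key : K * (Flam lam x - Flam lam β) ≤ g x - g β + K * (Flam lam x - Flam lam β) →
      True := fun _ => trivial
  clear key
  have main : g β ≤ g x := by
    rcases le_total β x with hbx | hbx
    · have mono : MonotoneOn g (Set.Icc β x) := by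
        apply monotoneOn_of_deriv_nonneg (convex_Icc β x)
        · intro t ht
          exact (hder t (lt_of_lt_of_le hβ ht.1)).continuousAt.continuousWithinAt
        · intro t ht
          rw [interior_Icc] at ht
          exact ((hder t (lt_trans hβ ht.1)).differentiableAt).differentiableWithinAt
        · intro t ht
          rw [interior_Icc] at ht
          have htpos : 0 < t := lt_trans hβ ht.1
          rw [(hder t htpos).deriv]
          rw [hsplit t htpos]
          have h1 : (1 + c / β) ^ (lam - 1) ≤ (1 + c / t) ^ (lam - 1) := by
            apply Real.rpow_le_rpow_of_nonpos (by positivity) _ hexp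
            have : c / t ≤ c / β := by
              apply div_le_div_of_nonneg_left hc.le hβ ht.1.le
            linarith
          have h2 : (0:ℝ) ≤ t ^ (lam - 1) := Real.rpow_nonneg htpos.le _
          nlinarith
      exact mono (Set.left_mem_Icc.2 hbx) (Set.right_mem_Icc.2 hbx) hbx
    · have anti : AntitoneOn g (Set.Icc x β) := by
        apply antitoneOn_of_deriv_nonpos (convex_Icc x β)
        · intro t ht
          exact (hder t (lt_of_lt_of_le hx ht.1)).continuousAt.continuousWithinAt
        · intro t ht
          rw [interior_Icc] at ht
          exact ((hder t (lt_trans hx ht.1)).differentiableAt).differentiableWithinAt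
        · intro t ht
          rw [interior_Icc] at ht
          have htpos : 0 < t := lt_trans hx ht.1
          rw [(hder t htpos).deriv]
          rw [hsplit t htpos]
          have h1 : (1 + c / t) ^ (lam - 1) ≤ (1 + c / β) ^ (lam - 1) := by
            apply Real.rpow_le_rpow_of_nonpos (by positivity) _ hexp
            have : c / β ≤ c / t := by
              apply div_le_div_of_nonneg_left hc.le htpos ht.2.le
            linarith
          have h2 : (0:ℝ) ≤ t ^ (lam - 1) := Real.rpow_nonneg htpos.le _
          nlinarith
      exact anti (Set.left_mem_Icc.2 hbx) (Set.right_mem_Icc.2 hbx) hbx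
  simp only [hg] at main
  linarith
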